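/- The number of hyposylvester classes of words of packed evaluation (i_1, i_2, ..., i_r) equals (i_2+1)(i_3+1)···(i_r+1). -/

import Mathlib

/-- One elementary hyposylvester rewriting. -/
def HypoStep {α : Type*} [LinearOrder α] (w w' : List α) : Prop :=
  (∃ (u v : List α) (a c : α), a < c ∧
      (∃ b ∈ u ++ [a, c] ++ v, a < b ∧ b < c) ∧
      w = u ++ [a, c] ++ v ∧ w' = u ++ [c, a] ++ v) ∨
  (∃ (u v x : List α) (a b : α), a < b ∧
      w = u ++ [a, b] ++ v ++ [a] ++ x ∧ w' = u ++ [b, a] ++ v ++ [a] ++ x)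

namespace Hypo


abbrev C (w w' : List ℕ) : Prop := Relation.EqvGen HypoStep w w'

lemma C.rfl {w : List ℕ} : C w w := Relation.EqvGen.refl w

lemma C.symm {w w' : List ℕ} (h : C w w') : C w' w := Relation.EqvGen.symm _ _ h

lemma C.trans {w₁ w₂ w₃ : List ℕ} (h : C w₁ w₂) (h' : C w₂ w₃) : C w₁ w₃ :=
  Relation.EqvGen.trans _ _ _ h h'

lemma C.of_step {w w' : List ℕ} (h : HypoStep w w') : C w w' := Relation.EqvGen.rel _ _ h

lemma step_context {w w' : List ℕ} (p q : List ℕ) (h : HypoStep w w') :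
    HypoStep (p ++ w ++ q) (p ++ w' ++ q) := by
  rcases h with ⟨u, v, a, c, hac, ⟨b, hb, hab, hbc⟩, rfl, rfl⟩ | ⟨u, v, x, a, b, hab, rfl, rfl⟩
  · refine Or.inl ⟨p ++ u, v ++ q, a, c, hac, ⟨b, ?_, hab, hbc⟩, by simp, by simp⟩
    simp only [List.mem_append] at hb ⊢
    tauto
  · exact Or.inr ⟨p ++ u, v, x ++ q, a, b, hab, by simp, by simp⟩

lemma C.context {w w' : List ℕ} (p q : List ℕ) (h : C w w') :
    C (p ++ w ++ q) (p ++ w' ++ q) := by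
  induction h with
  | rel a b hab => exact C.of_step (step_context p q hab)
  | refl a => exact C.rfl
  | symm a b hab ih => exact ih.symm
  | trans a b c hab hbc ih ih' => exact ih.trans ih'

lemma step_perm {w w' : List ℕ} (h : HypoStep w w') : w.Perm w' := by
  rcases h with ⟨u, v, a, c, _, _, rfl, rfl⟩ | ⟨u, v, x, a, b, _, rfl, rfl⟩
  · have h1 : u ++ [a, c] ++ v = u ++ (a :: c :: v) := by simp
    have h2 : u ++ [c, a] ++ v = u ++ (c :: a :: v) := by simp
    rw [h1, h2]
    exact List.Perm.append_left u (List.Perm.swap c a v)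
  · have h1 : ∀ y z : ℕ, u ++ [y, z] ++ v ++ [a] ++ x = u ++ (y :: z :: (v ++ a :: x)) := by
      simp
    rw [h1, h1]
    exact List.Perm.append_left u (List.Perm.swap b a _)

lemma C.perm {w w' : List ℕ} (h : C w w') : w.Perm w' := by
  induction h with
  | rel a b hab => exact step_perm hab
  | refl a => exact List.Perm.refl a
  | symm a b _ ih => exact ih.symm
  | trans a b c _ _ ih ih' => exact ih.trans ih'

lemma swap_far (p q : List ℕ) {a c b : ℕ} (hb : b ∈ p ++ q) (h1 : a < b) (h2 : b < c) :
    C (p ++ [a, c] ++ q) (p ++ [c, a] ++ q) := by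
  refine C.of_step (Or.inl ⟨p, q, a, c, h1.trans h2, ⟨b, ?_, h1, h2⟩, rfl, rfl⟩)
  simp only [List.mem_append] at hb ⊢
  tauto

lemma swap_far' (p q : List ℕ) {a c b : ℕ} (hb : b ∈ p ++ q) (h1 : a < b) (h2 : b < c) :
    C (p ++ [c, a] ++ q) (p ++ [a, c] ++ q) :=
  (swap_far p q hb h1 h2).symm

lemma swap_adj (p q : List ℕ) {a : ℕ} (ha : a ∈ q) :
    C (p ++ [a, a + 1] ++ q) (p ++ [a + 1, a] ++ q) := by
  obtain ⟨q₁, q₂, rfl⟩ := List.append_of_mem ha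
  refine C.of_step (Or.inr ⟨p, q₁, q₂, a, a + 1, Nat.lt_succ_self a, by simp, by simp⟩)

/-- transition function: count occurrences of `k+1` since the last `k`. -/
def g (k : ℕ) : ℕ → ℕ → ℕ := fun acc x => if x = k then 0 else if x = k + 1 then acc + 1 else acc

def F (k s : ℕ) (w : List ℕ) : ℕ := w.foldl (g k) s

def stat (k : ℕ) (w : List ℕ) : ℕ := F k 0 w

@[simp] lemma F_nil (k s : ℕ) : F k s [] = s := rfl

@[simp] lemma F_cons (k s x : ℕ) (w : List ℕ) : F k s (x :: w) = F k (g k s x) w := rfl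

@[simp] lemma g_self (k s : ℕ) : g k s k = 0 := by simp [g]

@[simp] lemma g_succ (k s : ℕ) : g k s (k + 1) = s + 1 := by
  simp only [g, if_neg (by omega : ¬ k + 1 = k), if_pos trivial]

lemma g_other {k x : ℕ} (h1 : x ≠ k) (h2 : x ≠ k + 1) (s : ℕ) : g k s x = s := by
  simp [g, h1, h2]

lemma F_append (k s : ℕ) (u v : List ℕ) : F k s (u ++ v) = F k (F k s u) v :=
  List.foldl_append

lemma F_reset {k : ℕ} {v : List ℕ} (hk : k ∈ v) (s s' : ℕ) : F k s v = F k s' v := by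
  induction v generalizing s s' with
  | nil => cases hk
  | cons x xs ih =>
    rcases List.mem_cons.mp hk with h | h
    · subst h
      simp [g]
    · simp only [F_cons]
      exact ih h _ _

lemma F_skip {k : ℕ} {v : List ℕ} (h : ∀ x ∈ v, x ≠ k ∧ x ≠ k + 1) (s : ℕ) : F k s v = s := by
  induction v generalizing s with
  | nil => rfl
  | cons x xs ih =>
    obtain ⟨h1, h2⟩ := h x (by simp)
    simp only [F_cons, g, if_neg h1, if_neg h2]
    exact ih (fun y hy => h y (by simp [hy])) s

lemma F_count {k : ℕ} {v : List ℕ} (h : k ∉ v) (s : ℕ) : F k s v = s + v.count (k + 1) := by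
  induction v generalizing s with
  | nil => simp
  | cons x xs ih =>
    have hx : x ≠ k := fun hh => h (by simp [hh])
    have hxs : k ∉ xs := fun hh => h (by simp [hh])
    by_cases h2 : x = k + 1
    · subst h2
      rw [F_cons, g_succ, ih hxs, List.count_cons_self]
      omega
    · rw [F_cons, g_other hx h2, ih hxs, List.count_cons_of_ne (by omega)]

lemma F_no_succ {k : ℕ} {v : List ℕ} (h : k + 1 ∉ v) (s : ℕ) :
    F k s v = if k ∈ v then 0 else s := by
  induction v generalizing s with
  | nil => simp
  | cons x xs ih =>
    have hx : x ≠ k + 1 := fun hh => h (by simp [hh])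
    have hxs : k + 1 ∉ xs := fun hh => h (by simp [hh])
    by_cases h1 : x = k
    · subst h1
      rw [F_cons, g_self, ih hxs]
      simp only [List.mem_cons, true_or, if_pos]
      split <;> rfl
    · rw [F_cons, g_other h1 hx, ih hxs]
      have hmem : k ∈ x :: xs ↔ k ∈ xs := by
        simp only [List.mem_cons]
        constructor
        · rintro (h | h)
          · exact absurd h.symm h1
          · exact h
        · exact Or.inr
      rw [if_congr hmem rfl rfl]

lemma F_le {k : ℕ} (v : List ℕ) (s : ℕ) : F k s v ≤ s + v.count (k + 1) := by
  induction v generalizing s with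
  | nil => simp
  | cons x xs ih =>
    simp only [F_cons]
    refine le_trans (ih _) ?_
    by_cases h1 : x = k + 1
    · subst h1
      rw [g_succ, List.count_cons_self]
      omega
    · rw [List.count_cons_of_ne (by omega)]
      by_cases h0 : x = k
      · subst h0; rw [g_self]; omega
      · rw [g_other h0 h1]

lemma stat_le_count (k : ℕ) (w : List ℕ) : stat k w ≤ w.count (k + 1) := by
  simpa [stat] using F_le (k := k) w 0

lemma F_filter {k m : ℕ} (h1 : m ≠ k) (h2 : m ≠ k + 1) (v : List ℕ) (s : ℕ) :
    F k s (v.filter (· ≠ m)) = F k s v := by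
  induction v generalizing s with
  | nil => rfl
  | cons x xs ih =>
    by_cases hx : x = m
    · subst hx
      rw [List.filter_cons_of_neg (by simp)]
      simp only [F_cons, g, if_neg h1, if_neg h2]
      exact ih s
    · rw [List.filter_cons_of_pos (by simpa using hx)]
      simp only [F_cons]
      exact ih _

lemma F_replicate_succ (k s n : ℕ) : F k s (List.replicate n (k + 1)) = s + n := by
  rw [F_count (by simp) s, List.count_replicate]
  simp

lemma g_comm {k a c : ℕ} (h1 : ¬(a = k ∧ c = k + 1)) (h2 : ¬(c = k ∧ a = k + 1)) (s : ℕ) :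
    g k (g k s a) c = g k (g k s c) a := by
  simp only [g]
  split_ifs <;> omega

lemma step_stat {w w' : List ℕ} (h : HypoStep w w') (k : ℕ) : stat k w = stat k w' := by
  rcases h with ⟨u, v, a, c, hac, ⟨b, _, hab, hbc⟩, rfl, rfl⟩ | ⟨u, v, x, a, b, hab, rfl, rfl⟩
  · have h1 : ¬(a = k ∧ c = k + 1) := by rintro ⟨h1', h2'⟩; omega
    have h2 : ¬(c = k ∧ a = k + 1) := by rintro ⟨h1', h2'⟩; omega
    simp only [stat, F, List.foldl_append, List.foldl_cons, List.foldl_nil]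
    rw [g_comm h1 h2]
  · by_cases hk : a = k ∧ b = k + 1
    · obtain ⟨rfl, rfl⟩ := hk
      simp only [stat, F, List.foldl_append, List.foldl_cons, List.foldl_nil]
      rw [g_self, g_self]
    · have h2 : ¬(b = k ∧ a = k + 1) := by rintro ⟨rfl, rfl⟩; omega
      simp only [stat, F, List.foldl_append, List.foldl_cons, List.foldl_nil]
      rw [g_comm hk h2]

lemma C_stat {w w' : List ℕ} (h : Relation.EqvGen HypoStep w w') (k : ℕ) :
    stat k w = stat k w' := by
  induction h with
  | rel a b hab => exact step_stat hab k
  | refl a => rfl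
  | symm a b _ ih => exact ih.symm
  | trans a b c _ _ ih ih' => exact ih.trans ih'

lemma mem_filter_ne {y m : ℕ} {l : List ℕ} (h : y ∈ l) (hne : y ≠ m) :
    y ∈ l.filter (· ≠ m) :=
  List.mem_filter.mpr ⟨h, by simpa using hne⟩

lemma of_mem_filter_ne {y m : ℕ} {l : List ℕ} (h : y ∈ l.filter (· ≠ m)) :
    y ∈ l ∧ y ≠ m := by
  have := List.mem_filter.mp h
  simpa using this

lemma count_append_singleton_self (m : ℕ) (l : List ℕ) :
    (l ++ [m]).count m = l.count m + 1 := by simp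

lemma count_append_singleton_ne {x m : ℕ} (hx : x ≠ m) (l : List ℕ) :
    (l ++ [x]).count m = l.count m := by
  rw [List.count_append]
  simp [List.count_singleton', Ne.symm hx, hx]

lemma filter_append_singleton_self (m : ℕ) (l : List ℕ) :
    (l ++ [m]).filter (· ≠ m) = l.filter (· ≠ m) := by
  rw [List.filter_append]
  simp

lemma filter_append_singleton_ne {x m : ℕ} (hx : x ≠ m) (l : List ℕ) :
    (l ++ [x]).filter (· ≠ m) = l.filter (· ≠ m) ++ [x] := by
  rw [List.filter_append]
  simp [hx]

/-- Move a single `m` to the right across letters that are all `< m - 1`. -/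
lemma move_right (m : ℕ) : ∀ (u p q : List ℕ),
    (∀ x ∈ u, x + 1 < m) → (∀ k < m, k ∈ p ++ u ++ q) →
    C (p ++ [m] ++ u ++ q) (p ++ u ++ [m] ++ q) := by
  intro u
  induction u with
  | nil => intro p q _ _; simp; exact C.rfl
  | cons x u' ih =>
    intro p q hu hall
    have hx : x + 1 < m := hu x (by simp)
    have step1 : C (p ++ [x, m] ++ (u' ++ q)) (p ++ [m, x] ++ (u' ++ q)) := by
      refine swap_far p (u' ++ q) (b := x + 1) ?_ (Nat.lt_succ_self x) hx
      have := hall (x + 1) hx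
      have hne : x + 1 ≠ x := by omega
      simp only [List.mem_append, List.mem_cons] at this ⊢
      tauto
    have step2 : C ((p ++ [x]) ++ [m] ++ u' ++ q) ((p ++ [x]) ++ u' ++ [m] ++ q) := by
      refine ih (p ++ [x]) q (fun y hy => hu y (by simp [hy])) ?_
      intro k hk
      have := hall k hk
      simp only [List.mem_append, List.mem_cons] at this ⊢
      tauto
    have e1 : p ++ [m] ++ (x :: u') ++ q = p ++ [m, x] ++ (u' ++ q) := by simp
    have e2 : (p ++ [x]) ++ [m] ++ u' ++ q = p ++ [x, m] ++ (u' ++ q) := by simp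
    have e3 : p ++ (x :: u') ++ [m] ++ q = (p ++ [x]) ++ u' ++ [m] ++ q := by simp
    rw [e1, e3]
    exact (step1.symm.trans (e2 ▸ step2))

/-- Move a single `m` to the left across letters `< m`; letters equal to `m-1` need a
later `m-1` in `q`. -/
lemma move_left (m : ℕ) : ∀ (u p q : List ℕ),
    (∀ x ∈ u, x < m) → (∀ x ∈ u, x + 1 = m → x ∈ q) → (∀ k < m, k ∈ p ++ u ++ q) →
    C (p ++ u ++ [m] ++ q) (p ++ [m] ++ u ++ q) := by
  intro u
  induction u using List.reverseRecOn with
  | nil => intro p q _ _ _; simp; exact C.rfl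
  | append_singleton u' x ih =>
    intro p q hu hlast hall
    have hx : x < m := hu x (by simp)
    have step1 : C ((p ++ u') ++ [x, m] ++ q) ((p ++ u') ++ [m, x] ++ q) := by
      rcases Nat.lt_or_ge (x + 1) m with hxm | hxm
      · refine swap_far (p ++ u') q (b := x + 1) ?_ (Nat.lt_succ_self x) hxm
        have := hall (x + 1) hxm
        have hne : x + 1 ≠ x := by omega
        simp only [List.mem_append, List.mem_cons] at this ⊢
        tauto
      · have hxe : x + 1 = m := by omega
        have hxq : x ∈ q := hlast x (by simp) hxe
        have := swap_adj (p ++ u') q hxq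
        rw [hxe] at this
        exact this
    have step2 : C (p ++ u' ++ [m] ++ ([x] ++ q)) (p ++ [m] ++ u' ++ ([x] ++ q)) := by
      refine ih p ([x] ++ q) (fun y hy => hu y (by simp [hy])) ?_ ?_
      · intro y hy hym
        have := hlast y (by simp [hy]) hym
        simp [this]
      · intro k hk
        have := hall k hk
        simp only [List.mem_append, List.mem_cons] at this ⊢
        tauto
    have e1 : p ++ (u' ++ [x]) ++ [m] ++ q = (p ++ u') ++ [x, m] ++ q := by simp
    have e2 : (p ++ u') ++ [m, x] ++ q = p ++ u' ++ [m] ++ ([x] ++ q) := by simp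
    have e3 : p ++ [m] ++ u' ++ ([x] ++ q) = p ++ [m] ++ (u' ++ [x]) ++ q := by simp
    rw [e1, ← e3]
    exact step1.trans (e2 ▸ step2)

/-- Sort all `m`'s in `v` to the right end, when `v` contains no `m - 1`. -/
lemma sort_right (m : ℕ) : ∀ (v p q : List ℕ),
    (∀ x ∈ v, x ≤ m ∧ x + 1 ≠ m) → (∀ k < m, k ∈ p ++ v ++ q) →
    C (p ++ v ++ q) (p ++ v.filter (· ≠ m) ++ List.replicate (v.count m) m ++ q) := by
  intro v
  induction v with
  | nil => intro p q _ _; simp; exact C.rfl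
  | cons x v' ih =>
    intro p q hv hall
    by_cases hx : x = m
    · rw [hx] at hv hall ⊢
      have ihr : C ((p ++ [m]) ++ v' ++ q)
          ((p ++ [m]) ++ v'.filter (· ≠ m) ++ List.replicate (v'.count m) m ++ q) := by
        refine ih (p ++ [m]) q (fun y hy => hv y (by simp [hy])) ?_
        intro k hk
        have := hall k hk
        simp only [List.mem_append, List.mem_cons] at this ⊢
        tauto
      have mv : C (p ++ [m] ++ v'.filter (· ≠ m) ++ (List.replicate (v'.count m) m ++ q))
          (p ++ v'.filter (· ≠ m) ++ [m] ++ (List.replicate (v'.count m) m ++ q)) := by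
        refine move_right m (v'.filter (· ≠ m)) p (List.replicate (v'.count m) m ++ q) ?_ ?_
        · intro y hy
          obtain ⟨hy1, hy2⟩ := of_mem_filter_ne hy
          have h1 := (hv y (by simp [hy1])).1
          have h2 := (hv y (by simp [hy1])).2
          omega
        · intro k hk
          have := hall k hk
          have hkm : k ≠ m := by omega
          have himp : k ∈ v' → k ∈ v'.filter (· ≠ m) := fun h => mem_filter_ne h hkm
          simp only [List.mem_append, List.mem_cons, List.mem_replicate] at this ⊢
          tauto
      have e0 : p ++ (m :: v') ++ q = (p ++ [m]) ++ v' ++ q := by simp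
      have e1 : (p ++ [m]) ++ v'.filter (· ≠ m) ++ List.replicate (v'.count m) m ++ q
          = p ++ [m] ++ v'.filter (· ≠ m) ++ (List.replicate (v'.count m) m ++ q) := by simp
      have e2 : p ++ v'.filter (· ≠ m) ++ [m] ++ (List.replicate (v'.count m) m ++ q)
          = p ++ (m :: v').filter (· ≠ m) ++ List.replicate ((m :: v').count m) m ++ q := by
        rw [List.filter_cons_of_neg (by simp), List.count_cons_self, List.replicate_succ]
        simp
      rw [e0, ← e2]
      exact ihr.trans (e1 ▸ mv)
    · have ihr : C ((p ++ [x]) ++ v' ++ q)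
          ((p ++ [x]) ++ v'.filter (· ≠ m) ++ List.replicate (v'.count m) m ++ q) := by
        refine ih (p ++ [x]) q (fun y hy => hv y (by simp [hy])) ?_
        intro k hk
        have := hall k hk
        simp only [List.mem_append, List.mem_cons] at this ⊢
        tauto
      have e0 : p ++ (x :: v') ++ q = (p ++ [x]) ++ v' ++ q := by simp
      have e2 : (p ++ [x]) ++ v'.filter (· ≠ m) ++ List.replicate (v'.count m) m ++ q
          = p ++ (x :: v').filter (· ≠ m) ++ List.replicate ((x :: v').count m) m ++ q := by
        rw [List.filter_cons_of_pos (by simpa using hx), List.count_cons_of_ne hx]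
        simp
      rw [e0, ← e2]
      exact ihr

/-- Sort all `m`'s in `u` to the left end, provided `m - 1` occurs in `q`. -/
lemma sort_left (m : ℕ) (hm : 1 ≤ m) : ∀ (u p q : List ℕ),
    (∀ x ∈ u, x ≤ m) → ((m - 1) ∈ q) → (∀ k < m, k ∈ p ++ u ++ q) →
    C (p ++ u ++ q) (p ++ List.replicate (u.count m) m ++ u.filter (· ≠ m) ++ q) := by
  intro u
  induction u using List.reverseRecOn with
  | nil => intro p q _ _ _; simp; exact C.rfl
  | append_singleton u' x ih =>
    intro p q hu hq hall
    by_cases hx : x = m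
    · rw [hx] at hu hall ⊢
      have ihr : C (p ++ u' ++ ([m] ++ q))
          (p ++ List.replicate (u'.count m) m ++ u'.filter (· ≠ m) ++ ([m] ++ q)) := by
        refine ih p ([m] ++ q) (fun y hy => hu y (by simp [hy])) (by simp [hq]) ?_
        intro k hk
        have := hall k hk
        simp only [List.mem_append, List.mem_cons] at this ⊢
        tauto
      have mv : C ((p ++ List.replicate (u'.count m) m) ++ u'.filter (· ≠ m) ++ [m] ++ q)
          ((p ++ List.replicate (u'.count m) m) ++ [m] ++ u'.filter (· ≠ m) ++ q) := by
        refine move_left m (u'.filter (· ≠ m)) (p ++ List.replicate (u'.count m) m) q ?_ ?_ ?_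
        · intro y hy
          obtain ⟨hy1, hy2⟩ := of_mem_filter_ne hy
          have := hu y (by simp [hy1])
          omega
        · intro y _ hym
          have : y = m - 1 := by omega
          rw [this]; exact hq
        · intro k hk
          have := hall k hk
          have hkm : k ≠ m := by omega
          have himp : k ∈ u' → k ∈ u'.filter (· ≠ m) := fun h => mem_filter_ne h hkm
          simp only [List.mem_append, List.mem_cons, List.mem_replicate] at this ⊢
          tauto
      have e0 : p ++ (u' ++ [m]) ++ q = p ++ u' ++ ([m] ++ q) := by simp
      have e1 : p ++ List.replicate (u'.count m) m ++ u'.filter (· ≠ m) ++ ([m] ++ q)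
          = (p ++ List.replicate (u'.count m) m) ++ u'.filter (· ≠ m) ++ [m] ++ q := by simp
      have e2 : (p ++ List.replicate (u'.count m) m) ++ [m] ++ u'.filter (· ≠ m) ++ q
          = p ++ List.replicate ((u' ++ [m]).count m) m ++ (u' ++ [m]).filter (· ≠ m) ++ q := by
        rw [count_append_singleton_self, filter_append_singleton_self,
          List.replicate_succ' (n := List.count m u') (a := m)]
        simp
      rw [e0, ← e2]
      exact ihr.trans (e1 ▸ mv)
    · have ihr : C (p ++ u' ++ ([x] ++ q))
          (p ++ List.replicate (u'.count m) m ++ u'.filter (· ≠ m) ++ ([x] ++ q)) := by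
        refine ih p ([x] ++ q) (fun y hy => hu y (by simp [hy])) (by simp [hq]) ?_
        intro k hk
        have := hall k hk
        simp only [List.mem_append, List.mem_cons] at this ⊢
        tauto
      have e0 : p ++ (u' ++ [x]) ++ q = p ++ u' ++ ([x] ++ q) := by simp
      have e2 : p ++ List.replicate (u'.count m) m ++ u'.filter (· ≠ m) ++ ([x] ++ q)
          = p ++ List.replicate ((u' ++ [x]).count m) m ++ (u' ++ [x]).filter (· ≠ m) ++ q := by
        rw [count_append_singleton_ne hx, filter_append_singleton_ne hx]
        simp
      rw [e0, ← e2]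
      exact ihr

lemma exists_last_split {a : ℕ} : ∀ {l : List ℕ}, a ∈ l →
    ∃ s t, l = s ++ a :: t ∧ a ∉ t := by
  intro l
  induction l with
  | nil => intro h; cases h
  | cons x xs ih =>
    intro h
    by_cases hx : a ∈ xs
    · obtain ⟨s, t, rfl, hat⟩ := ih hx
      exact ⟨x :: s, t, rfl, hat⟩
    · rcases List.mem_cons.mp h with h | h
      · exact ⟨[], xs, by simp [h], hx⟩
      · exact absurd h hx

/-- Normal form: all `m`'s pulled to the two ends. -/
lemma reduce (m : ℕ) (hm : 1 ≤ m) (w : List ℕ) (hall : ∀ k < m, k ∈ w)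
    (hle : ∀ x ∈ w, x ≤ m) :
    C w (List.replicate (w.count m - stat (m - 1) w) m ++ w.filter (· ≠ m) ++
      List.replicate (stat (m - 1) w) m) := by
  have hmem : m - 1 ∈ w := hall (m - 1) (by omega)
  obtain ⟨w₁, w₂, rfl, hnot⟩ := exists_last_split hmem
  set a := m - 1 with ha
  have ham : a + 1 = m := by omega
  -- stat computation
  have hstat : stat a (w₁ ++ a :: w₂) = w₂.count m := by
    have e : w₁ ++ a :: w₂ = (w₁ ++ [a]) ++ w₂ := by simp
    rw [stat, e, F_append, F_count hnot, ham]
    have : F a 0 (w₁ ++ [a]) = 0 := by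
      rw [F_append]
      simp [F, g]
    rw [this, Nat.zero_add]
  -- counts
  have hcnt : (w₁ ++ a :: w₂).count m = w₁.count m + w₂.count m := by
    have ham' : a ≠ m := by omega
    simp [List.count_append, List.count_cons, ham']
  -- step 1 : sort w₂'s m's to the right
  have s1 : C ((w₁ ++ [a]) ++ w₂ ++ []) ((w₁ ++ [a]) ++ w₂.filter (· ≠ m) ++
      List.replicate (w₂.count m) m ++ []) := by
    refine sort_right m w₂ (w₁ ++ [a]) [] ?_ ?_
    · intro x hx
      refine ⟨hle x (by simp [hx]), ?_⟩
      intro hxe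
      exact hnot (by rwa [show x = a by omega] at hx)
    · intro k hk
      have := hall k hk
      simp only [List.mem_append, List.mem_cons] at this ⊢
      tauto
  -- step 2 : sort w₁'s m's to the left
  have s2 : C ([] ++ w₁ ++ (a :: (w₂.filter (· ≠ m) ++ List.replicate (w₂.count m) m)))
      ([] ++ List.replicate (w₁.count m) m ++ w₁.filter (· ≠ m) ++
        (a :: (w₂.filter (· ≠ m) ++ List.replicate (w₂.count m) m))) := by
    refine sort_left m hm w₁ [] _ (fun x hx => hle x (by simp [hx])) (by simp [← ha]) ?_
    intro k hk
    have := hall k hk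
    have hkm : k ≠ m := by omega
    have himp : k ∈ w₂ → k ∈ w₂.filter (· ≠ m) := fun h => mem_filter_ne h hkm
    simp only [List.mem_append, List.mem_cons, List.mem_replicate, List.not_mem_nil,
      false_or] at this ⊢
    tauto
  -- assemble
  have hfil : (w₁ ++ a :: w₂).filter (· ≠ m) =
      w₁.filter (· ≠ m) ++ a :: w₂.filter (· ≠ m) := by
    have ham' : (a ≠ m) := by omega
    rw [List.filter_append, List.filter_cons_of_pos (by simpa using ham')]
  rw [hstat, hcnt, Nat.add_sub_cancel, hfil]
  have e1 : w₁ ++ a :: w₂ = (w₁ ++ [a]) ++ w₂ ++ [] := by simp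
  have e2 : (w₁ ++ [a]) ++ w₂.filter (· ≠ m) ++ List.replicate (w₂.count m) m ++ []
      = [] ++ w₁ ++ (a :: (w₂.filter (· ≠ m) ++ List.replicate (w₂.count m) m)) := by simp
  have e3 : [] ++ List.replicate (w₁.count m) m ++ w₁.filter (· ≠ m) ++
        (a :: (w₂.filter (· ≠ m) ++ List.replicate (w₂.count m) m))
      = List.replicate (w₁.count m) m ++ (w₁.filter (· ≠ m) ++ a :: w₂.filter (· ≠ m)) ++
        List.replicate (w₂.count m) m := by simp
  rw [e1]
  exact (s1.trans (e2 ▸ s2)).trans (e3 ▸ C.rfl)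

/-- Completeness: words with the same evaluation and the same statistics are congruent. -/
lemma complete : ∀ (m : ℕ) (w w' : List ℕ), (∀ x ∈ w, x ≤ m) → (∀ x ∈ w', x ≤ m) →
    (∀ k < m, k ∈ w) → (∀ j, w.count j = w'.count j) →
    (∀ k < m, stat k w = stat k w') → C w w' := by
  intro m
  induction m with
  | zero =>
    intro w w' hle hle' _ hcnt _
    have h0 : ∀ x ∈ w, x = 0 := fun x hx => Nat.le_zero.mp (hle x hx)
    have h0' : ∀ x ∈ w', x = 0 := fun x hx => Nat.le_zero.mp (hle' x hx)
    have e : w = List.replicate w.length 0 := List.eq_replicate_of_mem h0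
    have e' : w' = List.replicate w'.length 0 := List.eq_replicate_of_mem h0'
    have hlen : w.length = w'.length := by
      have c1 : w.count 0 = w.length := by
        rw [List.count_eq_length]
        intro b hb
        exact (h0 b hb).symm
      have c1' : w'.count 0 = w'.length := by
        rw [List.count_eq_length]
        intro b hb
        exact (h0' b hb).symm
      rw [← c1, ← c1', hcnt 0]
    rw [e, e', hlen]
    exact C.rfl
  | succ m ih =>
    intro w w' hle hle' hall hcnt hstat
    set M := m + 1 with hM
    have hm1 : 1 ≤ M := by omega
    have hall' : ∀ k < M, k ∈ w' := by
      intro k hk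
      have := List.count_pos_iff.mpr (hall k hk)
      rw [hcnt k] at this
      exact List.count_pos_iff.mp this
    have r1 := reduce M hm1 w hall hle
    have r2 := reduce M hm1 w' hall' hle'
    have hseq : stat (M - 1) w = stat (M - 1) w' := hstat (M - 1) (by omega)
    have hceq : w.count M = w'.count M := hcnt M
    -- middle parts congruent by IH
    have hmid : C (w.filter (· ≠ M)) (w'.filter (· ≠ M)) := by
      refine ih (w.filter (· ≠ M)) (w'.filter (· ≠ M)) ?_ ?_ ?_ ?_ ?_
      · intro x hx
        obtain ⟨h1, h2⟩ := of_mem_filter_ne hx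
        have := hle x h1
        omega
      · intro x hx
        obtain ⟨h1, h2⟩ := of_mem_filter_ne hx
        have := hle' x h1
        omega
      · intro k hk
        exact mem_filter_ne (hall k (by omega)) (by omega)
      · intro j
        by_cases hj : j = M
        · subst hj
          have z : ∀ l : List ℕ, (l.filter (· ≠ M)).count M = 0 := by
            intro l
            rw [List.count_eq_zero]
            intro hmem
            exact (of_mem_filter_ne hmem).2 rfl
          rw [z, z]
        · have cf : ∀ l : List ℕ, (l.filter (· ≠ M)).count j = l.count j := by
            intro l
            induction l with
            | nil => rfl
            | cons x xs ihl =>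
              by_cases hxM : x = M
              · rw [List.filter_cons_of_neg (by simp [hxM]), ihl,
                  List.count_cons_of_ne (by rw [hxM]; exact Ne.symm hj)]
              · rw [List.filter_cons_of_pos (by simpa using hxM)]
                simp only [List.count_cons, ihl]
          rw [cf, cf, hcnt j]
      · intro k hk
        have h1 : (M : ℕ) ≠ k := by omega
        have h2 : (M : ℕ) ≠ k + 1 := by omega
        rw [show stat k (w.filter (· ≠ M)) = F k 0 (w.filter (· ≠ M)) from rfl,
          F_filter h1 h2, show stat k (w'.filter (· ≠ M)) = F k 0 (w'.filter (· ≠ M)) from rfl,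
          F_filter h1 h2]
        exact hstat k (by omega)
    rw [hseq, hceq] at r1
    have hctx := C.context (List.replicate (w'.count M - stat (M - 1) w') M)
      (List.replicate (stat (M - 1) w') M) hmid
    exact (r1.trans hctx).trans r2.symm
lemma count_replicate' (n a j : ℕ) : (List.replicate n a).count j = if j = a then n else 0 := by
  induction n with
  | zero => simp
  | succ n ih =>
    rw [List.replicate_succ, List.count_cons, ih]
    by_cases h : j = a
    · simp [h]
    · simp [h, Ne.symm h]

/-- Canonical word with prescribed statistics. -/
def cw (I s : ℕ → ℕ) : ℕ → List ℕ
  | 0 => List.replicate (I 0) 0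
  | m + 1 => List.replicate (I (m + 1) - s (m + 1)) (m + 1) ++ cw I s m ++
      List.replicate (s (m + 1)) (m + 1)

lemma cw_le (I s : ℕ → ℕ) : ∀ m, ∀ x ∈ cw I s m, x ≤ m := by
  intro m
  induction m with
  | zero =>
    intro x hx
    rw [cw] at hx
    simp [List.eq_of_mem_replicate hx]
  | succ m ih =>
    intro x hx
    rw [cw] at hx
    simp only [List.mem_append] at hx
    rcases hx with (h | h) | h
    · rw [List.eq_of_mem_replicate h]
    · exact le_trans (ih x h) (by omega)
    · rw [List.eq_of_mem_replicate h]

lemma cw_count (I s : ℕ → ℕ) (hs : ∀ j, s j ≤ I j) :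
    ∀ m j, (cw I s m).count j = if j ≤ m then I j else 0 := by
  intro m
  induction m with
  | zero =>
    intro j
    rw [cw, count_replicate']
    by_cases hj : j = 0
    · simp [hj]
    · rw [if_neg hj, if_neg (by omega)]
  | succ m ih =>
    intro j
    rw [cw]
    simp only [List.count_append, count_replicate', ih j]
    by_cases hj : j = m + 1
    · subst hj
      rw [if_pos rfl, if_pos rfl, if_neg (by omega), if_pos (le_refl _)]
      have := hs (m + 1)
      omega
    · rw [if_neg hj, if_neg hj]
      by_cases hjm : j ≤ m
      · rw [if_pos hjm, if_pos (by omega)]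
        omega
      · rw [if_neg hjm, if_neg (by omega)]

lemma cw_mem (I s : ℕ → ℕ) (hs : ∀ j, s j ≤ I j) (m j : ℕ) (hj : j ≤ m) (hI : 1 ≤ I j) :
    j ∈ cw I s m := by
  have := cw_count I s hs m j
  rw [if_pos hj] at this
  exact List.count_pos_iff.mp (by omega)

lemma cw_not_mem (I s : ℕ → ℕ) (m j : ℕ) (hj : m < j) : j ∉ cw I s m :=
  fun h => absurd (cw_le I s m j h) (by omega)

lemma cw_stat (I s : ℕ → ℕ) (hs : ∀ j, s j ≤ I j) (hI : ∀ j, 1 ≤ I j) :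
    ∀ m k, stat k (cw I s m) = if k + 1 ≤ m then s (k + 1) else 0 := by
  intro m
  induction m with
  | zero =>
    intro k
    rw [if_neg (by omega)]
    have h1 : k + 1 ∉ cw I s 0 := cw_not_mem I s 0 (k + 1) (by omega)
    rw [stat, F_no_succ h1]
    split <;> rfl
  | succ m ih =>
    intro k
    rcases Nat.lt_trichotomy k m with hk | hk | hk
    · -- k + 1 ≤ m : outer blocks are skipped
      rw [if_pos (by omega)]
      rw [cw, stat, F_append, F_append]
      have hsk1 : ∀ x ∈ List.replicate (I (m + 1) - s (m + 1)) (m + 1), x ≠ k ∧ x ≠ k + 1 := by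
        intro x hx
        rw [List.eq_of_mem_replicate hx]
        omega
      have hsk2 : ∀ x ∈ List.replicate (s (m + 1)) (m + 1), x ≠ k ∧ x ≠ k + 1 := by
        intro x hx
        rw [List.eq_of_mem_replicate hx]
        omega
      rw [F_skip hsk1, F_skip hsk2]
      have := ih k
      rw [if_pos (by omega)] at this
      exact this
    · -- k = m : the interesting case
      subst hk
      rw [if_pos (le_refl _)]
      rw [cw, stat, F_append, F_append]
      have h1 : F k 0 (List.replicate (I (k + 1) - s (k + 1)) (k + 1))
          = I (k + 1) - s (k + 1) := by
        rw [F_count (fun h => by have := List.eq_of_mem_replicate h; omega),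
          count_replicate', if_pos rfl, Nat.zero_add]
      have h2 : ∀ t, F k t (cw I s k) = 0 := by
        intro t
        rw [F_no_succ (cw_not_mem I s k (k + 1) (by omega)),
          if_pos (cw_mem I s hs k k (le_refl _) (hI k))]
      have h3 : F k 0 (List.replicate (s (k + 1)) (k + 1)) = s (k + 1) := by
        rw [F_count (fun h => by have := List.eq_of_mem_replicate h; omega),
          count_replicate', if_pos rfl, Nat.zero_add]
      rw [h1, h2, h3]
    · -- k > m : k+1 does not occur
      rw [if_neg (by omega)]
      have h1 : k + 1 ∉ cw I s (m + 1) := cw_not_mem I s (m + 1) (k + 1) (by omega)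
      rw [stat, F_no_succ h1]
      split <;> rfl
section Transfer
variable {r : ℕ}

lemma step_up {w w' : List (Fin r)} (h : HypoStep w w') :
    HypoStep (w.map Fin.val) (w'.map Fin.val) := by
  rcases h with ⟨u, v, a, c, hac, ⟨b, hb, hab, hbc⟩, rfl, rfl⟩ | ⟨u, v, x, a, b, hab, rfl, rfl⟩
  · refine Or.inl ⟨u.map Fin.val, v.map Fin.val, a.val, c.val, hac, ⟨b.val, ?_, hab, hbc⟩,
      by simp, by simp⟩
    have := List.mem_map_of_mem (f := Fin.val) hb
    simpa using this
  · exact Or.inr ⟨u.map Fin.val, v.map Fin.val, x.map Fin.val, a.val, b.val, hab,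
      by simp, by simp⟩

lemma C_up {w w' : List (Fin r)} (h : Relation.EqvGen HypoStep w w') :
    C (w.map Fin.val) (w'.map Fin.val) := by
  induction h with
  | rel a b hab => exact Relation.EqvGen.rel _ _ (step_up hab)
  | refl a => exact Relation.EqvGen.refl _
  | symm a b _ ih => exact Relation.EqvGen.symm _ _ ih
  | trans a b c _ _ ih ih' => exact Relation.EqvGen.trans _ _ _ ih ih'

def gg (hr : 0 < r) : ℕ → Fin r := fun x => if h : x < r then ⟨x, h⟩ else ⟨0, hr⟩

lemma gg_val (hr : 0 < r) (a : Fin r) : gg hr a.val = a := by simp [gg, a.isLt]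

lemma val_gg (hr : 0 < r) {x : ℕ} (hx : x < r) : (gg hr x : ℕ) = x := by simp [gg, hx]

lemma gg_lt (hr : 0 < r) {x y : ℕ} (hx : x < r) (hy : y < r) (h : x < y) :
    gg hr x < gg hr y := by
  simp only [gg, dif_pos hx, dif_pos hy]
  exact h

lemma step_down (hr : 0 < r) {W W' : List ℕ} (hW : ∀ x ∈ W, x < r) (h : HypoStep W W') :
    HypoStep (W.map (gg hr)) (W'.map (gg hr)) := by
  rcases h with ⟨u, v, a, c, hac, ⟨b, hb, hab, hbc⟩, rfl, rfl⟩ | ⟨u, v, x, a, b, hab, rfl, rfl⟩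
  · have ha : a < r := hW a (by simp)
    have hc : c < r := hW c (by simp)
    have hbr : b < r := hW b hb
    refine Or.inl ⟨u.map (gg hr), v.map (gg hr), gg hr a, gg hr c, gg_lt hr ha hc hac,
      ⟨gg hr b, ?_, gg_lt hr ha hbr hab, gg_lt hr hbr hc hbc⟩, by simp, by simp⟩
    have := List.mem_map_of_mem (f := gg hr) hb
    simpa using this
  · have ha : a < r := hW a (by simp)
    have hb : b < r := hW b (by simp)
    exact Or.inr ⟨u.map (gg hr), v.map (gg hr), x.map (gg hr), gg hr a, gg hr b,
      gg_lt hr ha hb hab, by simp, by simp⟩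

lemma C_down (hr : 0 < r) : ∀ {W W' : List ℕ}, Relation.EqvGen HypoStep W W' →
    (∀ x ∈ W, x < r) →
    Relation.EqvGen HypoStep (W.map (gg hr)) (W'.map (gg hr)) := by
  intro W W' h
  induction h with
  | rel a b hab => intro ha; exact Relation.EqvGen.rel _ _ (step_down hr ha hab)
  | refl a => intro _; exact Relation.EqvGen.refl _
  | symm a b hab ih =>
    intro hb
    have ha : ∀ x ∈ a, x < r := fun x hx => hb x ((C.perm hab).mem_iff.mp hx)
    exact Relation.EqvGen.symm _ _ (ih ha)
  | trans a b c hab hbc ihab ihbc =>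
    intro ha
    have hb : ∀ x ∈ b, x < r := fun x hx => ha x ((C.perm hab).mem_iff.mpr hx)
    exact Relation.EqvGen.trans _ _ _ (ihab ha) (ihbc hb)

lemma count_map_gg (hr : 0 < r) (k : Fin r) :
    ∀ (W : List ℕ), (∀ x ∈ W, x < r) → (W.map (gg hr)).count k = W.count (k : ℕ) := by
  intro W
  induction W with
  | nil => intro _; rfl
  | cons x xs ih =>
    intro hW
    have hx : x < r := hW x (by simp)
    have heq : (gg hr x = k) ↔ (x = (k : ℕ)) := by
      constructor
      · intro h
        have := congrArg Fin.val h
        rwa [val_gg hr hx] at this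
      · intro h
        rw [h, gg_val]
    rw [List.map_cons, List.count_cons, List.count_cons, ih (fun y hy => hW y (by simp [hy]))]
    by_cases h : x = (k : ℕ)
    · rw [if_pos (by exact beq_iff_eq.mpr (heq.mpr h)), if_pos (beq_iff_eq.mpr h)]
    · rw [if_neg (by simp only [beq_iff_eq]; exact fun hh => h (heq.mp hh)),
        if_neg (by simpa using h)]

lemma map_val_map_gg (hr : 0 < r) (W : List ℕ) (hW : ∀ x ∈ W, x < r) :
    (W.map (gg hr)).map Fin.val = W := by
  rw [List.map_map]
  have : ∀ x ∈ W, (Fin.val ∘ gg hr) x = id x := fun x hx => val_gg hr (hW x hx)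
  rw [List.map_congr_left this, List.map_id]

lemma map_gg_map_val (hr : 0 < r) (w : List (Fin r)) : (w.map Fin.val).map (gg hr) = w := by
  rw [List.map_map]
  have : ∀ x ∈ w, (gg hr ∘ Fin.val) x = id x := fun x _ => gg_val hr x
  rw [List.map_congr_left this, List.map_id]

end Transfer

end Hypo

open Hypo in
/-- The number of hyposylvester classes of words of packed evaluation
`(i₁, …, i_r)` equals `(i₂+1)(i₃+1)⋯(i_r+1)`. -/
theorem card_hyposylvester_classes (r : ℕ) (i : Fin r → ℕ) (hi : ∀ k, 1 ≤ i k) :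
    Nat.card
      (Quotient (Setoid.comap
        (Subtype.val : {w : List (Fin r) // ∀ k, w.count k = i k} → List (Fin r))
        (Relation.EqvGen.setoid HypoStep))) =
      ∏ k ∈ Finset.univ.filter (fun k : Fin r => (k : ℕ) ≠ 0), (i k + 1) := by
  classical
  rcases Nat.eq_zero_or_pos r with hr | hr
  · subst hr
    have hnil : ∀ l : List (Fin 0), l = [] := by
      intro l
      cases l with
      | nil => rfl
      | cons x _ => exact x.elim0
    rw [show (Finset.univ.filter (fun k : Fin 0 => (k : ℕ) ≠ 0)) = ∅ by
      apply Finset.eq_empty_of_forall_notMem; intro k; exact k.elim0]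
    rw [Finset.prod_empty, Nat.card_eq_one_iff_unique]
    constructor
    · constructor
      intro q q'
      induction q using Quotient.ind with | _ w =>
      induction q' using Quotient.ind with | _ w' =>
      apply Quotient.sound
      show Relation.EqvGen HypoStep w.1 w'.1
      rw [hnil w.1, hnil w'.1]
      exact Relation.EqvGen.refl _
    · exact ⟨⟦⟨[], fun k => k.elim0⟩⟧⟩
  · set m := r - 1 with hm
    have hmr : m + 1 = r := by omega
    set T := ∀ k : Fin r, Fin (if (k : ℕ) = 0 then 1 else i k + 1) with hT
    -- the invariant map
    have bound : ∀ (w : {w : List (Fin r) // ∀ k, w.count k = i k}) (k : Fin r),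
        (k : ℕ) ≠ 0 → stat ((k : ℕ) - 1) (w.1.map Fin.val) < i k + 1 := by
      intro w k hk
      have h1 := stat_le_count ((k : ℕ) - 1) (w.1.map Fin.val)
      have h2 : (k : ℕ) - 1 + 1 = (k : ℕ) := by omega
      rw [h2] at h1
      have h3 : (w.1.map Fin.val).count (k : ℕ) = w.1.count k :=
        List.count_map_of_injective w.1 Fin.val Fin.val_injective k
      rw [h3, w.2 k] at h1
      omega
    set φfun : {w : List (Fin r) // ∀ k, w.count k = i k} → T :=
      fun w k => if h0 : (k : ℕ) = 0 then ⟨0, by simp [h0]⟩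
        else ⟨stat ((k : ℕ) - 1) (w.1.map Fin.val), by
          rw [if_neg h0]; exact bound w k h0⟩ with hφfun
    have hresp : ∀ a b : {w : List (Fin r) // ∀ k, w.count k = i k},
        (Setoid.comap (Subtype.val : _ → List (Fin r))
          (Relation.EqvGen.setoid HypoStep)).r a b → φfun a = φfun b := by
      intro a b hab
      have hC : C (a.1.map Fin.val) (b.1.map Fin.val) := C_up hab
      funext k
      by_cases h0 : (k : ℕ) = 0
      · simp [hφfun, h0]
      · simp only [hφfun, dif_neg h0]
        exact Fin.ext (C_stat hC _)
    set φ := Quotient.lift φfun hresp with hφ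
    have hinj : Function.Injective φ := by
      intro q q'
      induction q using Quotient.ind with | _ w =>
      induction q' using Quotient.ind with | _ w' =>
      intro heq
      have heq' : φfun w = φfun w' := heq
      apply Quotient.sound
      show Relation.EqvGen HypoStep w.1 w'.1
      set W := w.1.map Fin.val with hW
      set W' := w'.1.map Fin.val with hW'
      have hWlt : ∀ x ∈ W, x < r := by
        intro x hx
        obtain ⟨y, _, rfl⟩ := List.mem_map.mp hx
        exact y.isLt
      have hWlt' : ∀ x ∈ W', x < r := by
        intro x hx
        obtain ⟨y, _, rfl⟩ := List.mem_map.mp hx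
        exact y.isLt
      have hcntW : ∀ j, W.count j = W'.count j := by
        intro j
        by_cases hj : j < r
        · have e1 : W.count j = w.1.count ⟨j, hj⟩ :=
            List.count_map_of_injective w.1 Fin.val Fin.val_injective ⟨j, hj⟩
          have e2 : W'.count j = w'.1.count ⟨j, hj⟩ :=
            List.count_map_of_injective w'.1 Fin.val Fin.val_injective ⟨j, hj⟩
          rw [e1, e2, w.2, w'.2]
        · rw [List.count_eq_zero_of_not_mem (fun h => hj (hWlt j h)),
            List.count_eq_zero_of_not_mem (fun h => hj (hWlt' j h))]
      have hstatW : ∀ k < m, stat k W = stat k W' := by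
        intro k hk
        have hkr : k + 1 < r := by omega
        have := congrFun heq' ⟨k + 1, hkr⟩
        simp only [hφfun, dif_neg (by simp : ¬ ((⟨k + 1, hkr⟩ : Fin r) : ℕ) = 0)] at this
        have := congrArg Fin.val this
        simpa using this
      have hC : C W W' := by
        refine complete m W W' ?_ ?_ ?_ hcntW hstatW
        · intro x hx; have := hWlt x hx; omega
        · intro x hx; have := hWlt' x hx; omega
        · intro k hk
          have hkr : k < r := by omega
          have : W.count k = w.1.count ⟨k, hkr⟩ :=
            List.count_map_of_injective w.1 Fin.val Fin.val_injective ⟨k, hkr⟩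
          have hpos : 0 < W.count k := by rw [this, w.2]; exact hi _
          exact List.count_pos_iff.mp hpos
      have hfin := C_down hr hC hWlt
      have e1 : W.map (gg hr) = (w.1 : List (Fin r)) := by
        rw [hW]; exact map_gg_map_val hr w.1
      have e2 : W'.map (gg hr) = (w'.1 : List (Fin r)) := by
        rw [hW']; exact map_gg_map_val hr w'.1
      rw [e1, e2] at hfin
      exact hfin
    have hsurj : Function.Surjective φ := by
      intro t
      set Ifun : ℕ → ℕ := fun j => if h : j < r then i ⟨j, h⟩ else 1 with hIfun
      set sfun : ℕ → ℕ := fun j =>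
        if h : j < r then (if j = 0 then 0 else (t ⟨j, h⟩ : ℕ)) else 0 with hsfun
      have hI : ∀ j, 1 ≤ Ifun j := by
        intro j
        simp only [hIfun]
        split
        · exact hi _
        · exact le_refl 1
      have hs : ∀ j, sfun j ≤ Ifun j := by
        intro j
        simp only [hIfun, hsfun]
        by_cases hj : j < r
        · rw [dif_pos hj, dif_pos hj]
          by_cases h0 : j = 0
          · simp [h0]
          · rw [if_neg h0]
            have hlt := (t ⟨j, hj⟩).isLt
            simp only [show ((⟨j, hj⟩ : Fin r) : ℕ) = j from rfl, if_neg h0] at hlt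
            omega
        · rw [dif_neg hj, dif_neg hj]
          omega
      set WN := cw Ifun sfun m with hWN
      have hWNlt : ∀ x ∈ WN, x < r := fun x hx => by
        have := cw_le Ifun sfun m x hx; omega
      set wF : List (Fin r) := WN.map (gg hr) with hwF
      have hcounts : ∀ k : Fin r, wF.count k = i k := by
        intro k
        rw [hwF, count_map_gg hr k WN hWNlt, hWN, cw_count Ifun sfun hs m (k : ℕ),
          if_pos (by omega : (k : ℕ) ≤ m)]
        simp only [hIfun]
        rw [dif_pos k.isLt]
      refine ⟨Quotient.mk _ ⟨wF, hcounts⟩, ?_⟩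
      have hred : φ (Quotient.mk _ ⟨wF, hcounts⟩) = φfun ⟨wF, hcounts⟩ := rfl
      rw [hred]
      funext k
      by_cases h0 : (k : ℕ) = 0
      · simp only [hφfun, dif_pos h0]
        have hlt : (t k : ℕ) < 1 := by
          have := (t k).isLt
          simpa [h0] using this
        refine Fin.ext ?_
        show (0 : ℕ) = (t k : ℕ)
        omega
      · simp only [hφfun, dif_neg h0]
        refine Fin.ext ?_
        show stat ((k : ℕ) - 1) ((⟨wF, hcounts⟩ : {w : List (Fin r) // ∀ k, w.count k = i k}).1.map Fin.val) = (t k : ℕ)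
        have hmapval : wF.map Fin.val = WN := map_val_map_gg hr WN hWNlt
        rw [show (⟨wF, hcounts⟩ : {w : List (Fin r) // ∀ k, w.count k = i k}).1 = wF from rfl,
          hmapval, hWN, cw_stat Ifun sfun hs hI m ((k : ℕ) - 1)]
        have hk1 : (k : ℕ) - 1 + 1 = (k : ℕ) := by omega
        rw [hk1, if_pos (by omega : (k : ℕ) ≤ m)]
        simp only [hsfun]
        rw [dif_pos k.isLt, if_neg h0]
      -- end surjectivity
    have hcard := Nat.card_eq_of_bijective φ ⟨hinj, hsurj⟩
    rw [hcard, Nat.card_eq_fintype_card, Fintype.card_pi]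
    have : ∀ k : Fin r, Fintype.card (Fin (if (k : ℕ) = 0 then 1 else i k + 1))
        = if (k : ℕ) = 0 then 1 else i k + 1 := fun k => Fintype.card_fin _
    rw [Finset.prod_congr rfl (fun k _ => this k)]
    rw [Finset.prod_filter]
    refine Finset.prod_congr rfl ?_
    intro k _
    by_cases h0 : (k : ℕ) = 0
    · simp [h0]
    · simp [h0]
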